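/- In the polynomial ring R = ℝ[x_{11}, x_{12}, x_{21}, x_{22}, y_{11}, y_{12}, y_{21}, y_{22}], the ideal generated by the fourteen polynomials x_{11}x_{12} + y_{11}y_{12} + x_{21}x_{22} + y_{21}y_{22}; x_{11}y_{12} − x_{12}y_{11} + x_{21}y_{22} − x_{22}y_{21}; x_{ij}² + y_{ij}² − 1/2 for 1 ≤ i, j ≤ 2; (x_{11}+x_{21})² + (y_{11}+y_{21})² − 1; (x_{11}−x_{21})² + (y_{11}−y_{21})² − 1; (x_{12}+x_{22})² + (y_{12}+y_{22})² − 1; (x_{12}−x_{22})² + (y_{12}−y_{22})² − 1; (x_{11}+y_{21})² + (y_{11}−x_{21})² − 1; (x_{11}−y_{21})² + (y_{11}+x_{21})² − 1; (x_{12}+y_{22})² + (y_{12}−x_{22})² − 1; (x_{12}−y_{22})² + (y_{12}+x_{22})² − 1 is the unit ideal of R; equivalently, the constant 1/2 belongs to this ideal. -/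
import Mathlib


open scoped BigOperators

/-- The polynomial ring `ℝ[x_{11}, x_{12}, x_{21}, x_{22}, y_{11}, y_{12}, y_{21}, y_{22}]`:
the left summand indexes the `x` variables and the right summand the `y` variables. -/
abbrev R8 := MvPolynomial ((Fin 2 × Fin 2) ⊕ (Fin 2 × Fin 2)) ℝ

noncomputable def xv (i j : Fin 2) : R8 := MvPolynomial.X (Sum.inl (i, j))

noncomputable def yv (i j : Fin 2) : R8 := MvPolynomial.X (Sum.inr (i, j))

/-- The fourteen generators of the ideal `M₄^{2}`. -/
noncomputable def gens14 : Set R8 :=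
  { xv 0 0 * xv 0 1 + yv 0 0 * yv 0 1 + xv 1 0 * xv 1 1 + yv 1 0 * yv 1 1,
    xv 0 0 * yv 0 1 - xv 0 1 * yv 0 0 + xv 1 0 * yv 1 1 - xv 1 1 * yv 1 0,
    xv 0 0 ^ 2 + yv 0 0 ^ 2 - MvPolynomial.C (1 / 2),
    xv 0 1 ^ 2 + yv 0 1 ^ 2 - MvPolynomial.C (1 / 2),
    xv 1 0 ^ 2 + yv 1 0 ^ 2 - MvPolynomial.C (1 / 2),
    xv 1 1 ^ 2 + yv 1 1 ^ 2 - MvPolynomial.C (1 / 2),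
    (xv 0 0 + xv 1 0) ^ 2 + (yv 0 0 + yv 1 0) ^ 2 - 1,
    (xv 0 0 - xv 1 0) ^ 2 + (yv 0 0 - yv 1 0) ^ 2 - 1,
    (xv 0 1 + xv 1 1) ^ 2 + (yv 0 1 + yv 1 1) ^ 2 - 1,
    (xv 0 1 - xv 1 1) ^ 2 + (yv 0 1 - yv 1 1) ^ 2 - 1,
    (xv 0 0 + yv 1 0) ^ 2 + (yv 0 0 - xv 1 0) ^ 2 - 1,
    (xv 0 0 - yv 1 0) ^ 2 + (yv 0 0 + xv 1 0) ^ 2 - 1,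
    (xv 0 1 + yv 1 1) ^ 2 + (yv 0 1 - xv 1 1) ^ 2 - 1,
    (xv 0 1 - yv 1 1) ^ 2 + (yv 0 1 + xv 1 1) ^ 2 - 1 }

lemma mem_g3 : (xv 0 0 ^ 2 + yv 0 0 ^ 2 - MvPolynomial.C (1 / 2)) ∈ gens14 := by
  unfold gens14
  exact Set.mem_insert_iff.mpr (Or.inr (Set.mem_insert_iff.mpr (Or.inr
    (Set.mem_insert _ _))))

lemma mem_g5 : (xv 1 0 ^ 2 + yv 1 0 ^ 2 - MvPolynomial.C (1 / 2)) ∈ gens14 := by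
  unfold gens14
  exact Set.mem_insert_iff.mpr (Or.inr (Set.mem_insert_iff.mpr (Or.inr
    (Set.mem_insert_iff.mpr (Or.inr (Set.mem_insert_iff.mpr (Or.inr
    (Set.mem_insert _ _))))))))

lemma mem_g7 : ((xv 0 0 + xv 1 0) ^ 2 + (yv 0 0 + yv 1 0) ^ 2 - 1) ∈ gens14 := by
  unfold gens14
  exact Set.mem_insert_iff.mpr (Or.inr (Set.mem_insert_iff.mpr (Or.inr
    (Set.mem_insert_iff.mpr (Or.inr (Set.mem_insert_iff.mpr (Or.inr
    (Set.mem_insert_iff.mpr (Or.inr (Set.mem_insert_iff.mpr (Or.inr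
    (Set.mem_insert _ _))))))))))))

lemma mem_g8 : ((xv 0 0 - xv 1 0) ^ 2 + (yv 0 0 - yv 1 0) ^ 2 - 1) ∈ gens14 := by
  unfold gens14
  exact Set.mem_insert_iff.mpr (Or.inr (Set.mem_insert_iff.mpr (Or.inr
    (Set.mem_insert_iff.mpr (Or.inr (Set.mem_insert_iff.mpr (Or.inr
    (Set.mem_insert_iff.mpr (Or.inr (Set.mem_insert_iff.mpr (Or.inr
    (Set.mem_insert_iff.mpr (Or.inr (Set.mem_insert _ _))))))))))))))

lemma mem_g11 : ((xv 0 0 + yv 1 0) ^ 2 + (yv 0 0 - xv 1 0) ^ 2 - 1) ∈ gens14 := by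
  unfold gens14
  exact Set.mem_insert_iff.mpr (Or.inr (Set.mem_insert_iff.mpr (Or.inr
    (Set.mem_insert_iff.mpr (Or.inr (Set.mem_insert_iff.mpr (Or.inr
    (Set.mem_insert_iff.mpr (Or.inr (Set.mem_insert_iff.mpr (Or.inr
    (Set.mem_insert_iff.mpr (Or.inr (Set.mem_insert_iff.mpr (Or.inr
    (Set.mem_insert_iff.mpr (Or.inr (Set.mem_insert_iff.mpr (Or.inr
    (Set.mem_insert _ _))))))))))))))))))))

lemma mem_g12 : ((xv 0 0 - yv 1 0) ^ 2 + (yv 0 0 + xv 1 0) ^ 2 - 1) ∈ gens14 := by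
  unfold gens14
  exact Set.mem_insert_iff.mpr (Or.inr (Set.mem_insert_iff.mpr (Or.inr
    (Set.mem_insert_iff.mpr (Or.inr (Set.mem_insert_iff.mpr (Or.inr
    (Set.mem_insert_iff.mpr (Or.inr (Set.mem_insert_iff.mpr (Or.inr
    (Set.mem_insert_iff.mpr (Or.inr (Set.mem_insert_iff.mpr (Or.inr
    (Set.mem_insert_iff.mpr (Or.inr (Set.mem_insert_iff.mpr (Or.inr
    (Set.mem_insert_iff.mpr (Or.inr (Set.mem_insert _ _))))))))))))))))))))))

theorem M4_is_unit_ideal :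
    Ideal.span gens14 = ⊤ ∧ MvPolynomial.C ((1 : ℝ) / 2) ∈ Ideal.span gens14 := by
  have hC : MvPolynomial.C ((1 : ℝ) / 2) * 2 = (1 : R8) := by
    rw [show (2 : R8) = MvPolynomial.C (2 : ℝ) from (map_ofNat MvPolynomial.C 2).symm,
      ← MvPolynomial.C_mul]
    norm_num
  have h3 := Ideal.subset_span mem_g3
  have h5 := Ideal.subset_span mem_g5
  have h7 := Ideal.subset_span mem_g7
  have h8 := Ideal.subset_span mem_g8
  have h11 := Ideal.subset_span mem_g11
  have h12 := Ideal.subset_span mem_g12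
  have key : MvPolynomial.C ((1 : ℝ) / 2) =
      (MvPolynomial.C ((1 : ℝ) / 2) * (xv 0 0 * xv 1 0 + yv 0 0 * yv 1 0)) *
        (((xv 0 0 + xv 1 0) ^ 2 + (yv 0 0 + yv 1 0) ^ 2 - 1)
          - ((xv 0 0 - xv 1 0) ^ 2 + (yv 0 0 - yv 1 0) ^ 2 - 1))
      + (MvPolynomial.C ((1 : ℝ) / 2) * (xv 0 0 * yv 1 0 - yv 0 0 * xv 1 0)) *
        (((xv 0 0 + yv 1 0) ^ 2 + (yv 0 0 - xv 1 0) ^ 2 - 1)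
          - ((xv 0 0 - yv 1 0) ^ 2 + (yv 0 0 + xv 1 0) ^ 2 - 1))
      - (2 * (xv 0 0 ^ 2 + yv 0 0 ^ 2 - MvPolynomial.C (1 / 2))) *
          (xv 1 0 ^ 2 + yv 1 0 ^ 2 - MvPolynomial.C (1 / 2))
      - (xv 0 0 ^ 2 + yv 0 0 ^ 2 - MvPolynomial.C (1 / 2))
      - (xv 1 0 ^ 2 + yv 1 0 ^ 2 - MvPolynomial.C (1 / 2)) := by
    linear_combination (-(2 * (xv 0 0 ^ 2 + yv 0 0 ^ 2 - MvPolynomial.C ((1:ℝ) / 2))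
        * (xv 1 0 ^ 2 + yv 1 0 ^ 2 - MvPolynomial.C ((1:ℝ) / 2))
      + (2 * MvPolynomial.C ((1:ℝ) / 2) + 1)
        * ((xv 0 0 ^ 2 + yv 0 0 ^ 2 - MvPolynomial.C ((1:ℝ) / 2))
          + (xv 1 0 ^ 2 + yv 1 0 ^ 2 - MvPolynomial.C ((1:ℝ) / 2))
          + MvPolynomial.C ((1:ℝ) / 2)))) * hC
  have hmem : MvPolynomial.C ((1 : ℝ) / 2) ∈ Ideal.span gens14 := by
    rw [key]
    exact sub_mem (sub_mem (sub_mem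
      (add_mem (Ideal.mul_mem_left _ _ (sub_mem h7 h8))
        (Ideal.mul_mem_left _ _ (sub_mem h11 h12)))
      (Ideal.mul_mem_left _ _ h5)) h3) h5
  refine ⟨?_, hmem⟩
  rw [Ideal.eq_top_iff_one]
  have h1 := Ideal.mul_mem_left _ 2 hmem
  rwa [mul_comm, hC] at h1
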